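/- Let G be a graph with a star coloring φ using k colors, and suppose there is a constant c_k such that every hypergraph of maximum degree less than k has a strong odd vertex coloring with c_k colors. Then G has a strong odd coloring with at most c_k · k colors. -/
import Mathlib


open Finset

attribute [local instance] Classical.propDecidable

/-- A proper vertex-coloring of a graph. -/
def IsProperColoring {V : Type*} (G : SimpleGraph V) {α : Type*} (φ : V → α) : Prop :=
  ∀ u v : V, G.Adj u v → φ u ≠ φ v

/-- The number of neighbors of `v` in `G` having color `c` under `φ`. -/
noncomputable def colorCount {V : Type*} [Fintype V] (G : SimpleGraph V) {α : Type*}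
    (φ : V → α) (v : V) (c : α) : ℕ :=
  (Finset.univ.filter (fun u => G.Adj v u ∧ φ u = c)).card

/-- A star coloring: a proper coloring in which every path on four vertices receives at
least three colors (equivalently, the union of any two color classes induces a star
forest). -/
def IsStarColoring {V : Type*} (G : SimpleGraph V) {k : ℕ} (φ : V → Fin k) : Prop :=
  IsProperColoring G φ ∧
  ∀ a b c d : V, G.Adj a b → G.Adj b c → G.Adj c d →
    a ≠ c → b ≠ d → a ≠ d → ¬(φ a = φ c ∧ φ b = φ d)

/-- If `G` has a star coloring with `k` colors, and every hypergraph of maximum degree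
less than `k` admits a strong odd vertex coloring with `ck` colors (every hyperedge meets
every color class in zero or an odd number of vertices), then `G` has a strong odd
coloring with at most `ck * k` colors. -/
theorem strong_odd_from_star_coloring {V : Type} [Fintype V] (G : SimpleGraph V)
    (k ck : ℕ) (φ : V → Fin k) (hφ : IsStarColoring G φ)
    (hyp : ∀ (U : Type) [Fintype U] (E : Finset (Finset U)),
      (∀ u : U, (E.filter (fun e => u ∈ e)).card < k) →
      ∃ ψ : U → Fin ck, ∀ e ∈ E, ∀ col : Fin ck,
        ((e.filter (fun u => ψ u = col)).card = 0 ∨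
          Odd ((e.filter (fun u => ψ u = col)).card))) :
    ∃ g : V → Fin (ck * k),
      IsProperColoring G g ∧
      ∀ (v : V) (col : Fin (ck * k)),
        colorCount G g v col = 0 ∨ Odd (colorCount G g v col) := by
  rcases Nat.eq_zero_or_pos k with hk | hk
  · subst hk
    exact ⟨fun v => (φ v).elim0, fun u _ _ => (φ u).elim0, fun v _ => (φ v).elim0⟩
  set S : V → Fin k → Finset V :=
    fun v c => univ.filter (fun u => G.Adj v u ∧ φ u = c) with hS
  set E : Finset (Finset V) :=
    ((univ : Finset (V × Fin k)).image (fun p => S p.1 p.2)).filter (fun e => 2 ≤ e.card)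
    with hE
  -- key star-coloring consequence
  have star : ∀ (u v v' : V) (c : Fin k), G.Adj v u → G.Adj v' u → v ≠ v' → φ v = φ v' →
      2 ≤ (S v c).card → u ∈ S v c → False := by
    intro u v v' c hv hv' hne hcol hcard hu
    obtain ⟨u', hu', hne'⟩ := Finset.exists_mem_ne hcard u
    rw [hS] at hu hu'
    have hu'v : G.Adj v u' := (Finset.mem_filter.mp hu').2.1
    have hcu' : φ u' = c := (Finset.mem_filter.mp hu').2.2
    have hcu : φ u = c := (Finset.mem_filter.mp hu).2.2
    have hvu : φ v ≠ φ u := hφ.1 v u hv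
    have h1 : u' ≠ v' := by
      intro h
      exact hvu (by rw [hcol, ← h, hcu', ← hcu])
    exact hφ.2 u' v u v' hu'v.symm hv hv'.symm hne' hne h1 ⟨hcu'.trans hcu.symm, hcol⟩
  -- degree bound
  have hdeg : ∀ u : V, (E.filter (fun e => u ∈ e)).card < k := by
    intro u
    have hmem : ∀ e ∈ E.filter (fun e => u ∈ e),
        (∃ v, e = S v (φ u) ∧ G.Adj v u) ∧ 2 ≤ e.card := by
      intro e he
      rw [Finset.mem_filter] at he
      obtain ⟨heE, hue⟩ := he
      rw [hE, Finset.mem_filter] at heE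
      obtain ⟨him, hcard⟩ := heE
      obtain ⟨⟨v, c⟩, -, rfl⟩ := Finset.mem_image.mp him
      rw [hS] at hue
      simp only [Finset.mem_filter, Finset.mem_univ, true_and] at hue
      refine ⟨⟨v, by rw [hue.2], hue.1⟩, hcard⟩
    set f : Finset V → Fin k := fun e =>
      if h : ∃ v, e = S v (φ u) ∧ G.Adj v u then φ h.choose else φ u with hfdef
    have key : ∀ e ∈ E.filter (fun e => u ∈ e),
        ∃ v, e = S v (φ u) ∧ G.Adj v u ∧ f e = φ v ∧ f e ≠ φ u ∧ 2 ≤ e.card := by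
      intro e he
      obtain ⟨h, hcard⟩ := hmem e he
      have hf : f e = φ h.choose := by simp only [hfdef, dif_pos h]
      refine ⟨h.choose, h.choose_spec.1, h.choose_spec.2, hf, ?_, hcard⟩
      rw [hf]
      exact hφ.1 _ u h.choose_spec.2
    have hle : (E.filter (fun e => u ∈ e)).card
        ≤ ((univ : Finset (Fin k)).erase (φ u)).card := by
      apply Finset.card_le_card_of_injOn f
      · intro e he
        obtain ⟨v, -, -, -, hne, -⟩ := key e he
        exact Finset.mem_erase.mpr ⟨hne, Finset.mem_univ _⟩
      · intro e₁ h₁ e₂ h₂ hfeq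
        obtain ⟨v₁, he₁, ha₁, hf₁, -, hc₁⟩ := key e₁ (Finset.mem_coe.mp h₁)
        obtain ⟨v₂, he₂, ha₂, hf₂, -, -⟩ := key e₂ (Finset.mem_coe.mp h₂)
        by_contra hne
        have hvne : v₁ ≠ v₂ := fun h => hne (by rw [he₁, he₂, h])
        have hcol : φ v₁ = φ v₂ := by rw [← hf₁, ← hf₂, hfeq]
        have hu₁ : u ∈ e₁ := (Finset.mem_filter.mp (Finset.mem_coe.mp h₁)).2
        exact star u v₁ v₂ (φ u) ha₁ ha₂ hvne hcol (he₁ ▸ hc₁) (he₁ ▸ hu₁)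
    have hcerase : ((univ : Finset (Fin k)).erase (φ u)).card = k - 1 := by
      rw [Finset.card_erase_of_mem (Finset.mem_univ _), Finset.card_univ, Fintype.card_fin]
    omega
  obtain ⟨ψ, hψ⟩ := hyp V E hdeg
  have hval : ∀ v : V, (ψ v : ℕ) * k + (φ v : ℕ) < ck * k := by
    intro v
    calc (ψ v : ℕ) * k + (φ v : ℕ) < ((ψ v : ℕ) + 1) * k := by
          rw [add_mul, one_mul]; exact Nat.add_lt_add_left (φ v).isLt _
      _ ≤ ck * k := Nat.mul_le_mul_right k (ψ v).isLt
  have gdec : ∀ v : V, (((ψ v : ℕ) * k + (φ v : ℕ)) % k = (φ v : ℕ))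
      ∧ (((ψ v : ℕ) * k + (φ v : ℕ)) / k = (ψ v : ℕ)) := by
    intro v
    constructor
    · rw [mul_comm, Nat.mul_add_mod, Nat.mod_eq_of_lt (φ v).isLt]
    · rw [add_comm, Nat.add_mul_div_right _ _ hk, Nat.div_eq_of_lt (φ v).isLt, zero_add]
  refine ⟨fun v => ⟨(ψ v : ℕ) * k + (φ v : ℕ), hval v⟩, ?_, ?_⟩
  · intro u v hadj heq
    have hv : (ψ u : ℕ) * k + (φ u : ℕ) = (ψ v : ℕ) * k + (φ v : ℕ) :=
      congrArg Fin.val heq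
    have h1 : (φ u : ℕ) = (φ v : ℕ) := by rw [← (gdec u).1, ← (gdec v).1, hv]
    exact hφ.1 u v hadj (Fin.ext h1)
  · intro v col
    have ha : (col : ℕ) / k < ck := (Nat.div_lt_iff_lt_mul hk).mpr col.isLt
    set A : Fin ck := ⟨(col : ℕ) / k, ha⟩ with hA
    set c : Fin k := ⟨(col : ℕ) % k, Nat.mod_lt _ hk⟩ with hc
    have hcolval : ((col : ℕ) / k) * k + (col : ℕ) % k = (col : ℕ) := by
      rw [mul_comm]; exact Nat.div_add_mod _ _
    have hset : (univ.filter (fun u => G.Adj v u ∧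
          (⟨(ψ u : ℕ) * k + (φ u : ℕ), hval u⟩ : Fin (ck * k)) = col))
        = (S v c).filter (fun u => ψ u = A) := by
      ext u
      rw [hS]
      simp only [Finset.mem_filter, Finset.mem_univ, true_and, and_assoc]
      constructor
      · rintro ⟨hadj, heq⟩
        have hv : (ψ u : ℕ) * k + (φ u : ℕ) = (col : ℕ) := congrArg Fin.val heq
        refine ⟨hadj, ?_, ?_⟩
        · apply Fin.ext
          show (φ u : ℕ) = (col : ℕ) % k
          rw [← hv, (gdec u).1]
        · apply Fin.ext
          show (ψ u : ℕ) = (col : ℕ) / k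
          rw [← hv, (gdec u).2]
      · rintro ⟨hadj, hcu, hAu⟩
        refine ⟨hadj, ?_⟩
        apply Fin.ext
        show (ψ u : ℕ) * k + (φ u : ℕ) = (col : ℕ)
        rw [hcu, hAu]
        exact hcolval
    have hcc : colorCount G (fun v => (⟨(ψ v : ℕ) * k + (φ v : ℕ), hval v⟩ : Fin (ck * k)))
        v col = ((S v c).filter (fun u => ψ u = A)).card := by
      unfold colorCount
      congr 1
      rw [← hset]
      ext u
      simp only [Finset.mem_filter]
    rw [hcc]
    by_cases hcard : 2 ≤ (S v c).card
    · have hE' : S v c ∈ E := by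
        rw [hE, Finset.mem_filter]
        exact ⟨Finset.mem_image.mpr ⟨(v, c), Finset.mem_univ _, rfl⟩, hcard⟩
      exact hψ (S v c) hE' A
    · push_neg at hcard
      have h1 : ((S v c).filter (fun u => ψ u = A)).card ≤ 1 :=
        le_trans (Finset.card_filter_le _ _) (by omega)
      rcases Nat.le_one_iff_eq_zero_or_eq_one.mp h1 with h | h
      · exact Or.inl h
      · exact Or.inr (h ▸ odd_one)
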